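/- Let E be a Banach space, T, U : E → E commuting affine nonexpansive mappings, and X ⊆ E a nonempty convex set with TX ⊆ X, UX ⊆ X, and inf_{x∈X}‖x − Tx‖ = inf_{x∈X}‖x − Ux‖ = 0. Suppose moreover m(T,X)=0 implies ‖w − Tⁿw‖/n → 0 for w ∈ X (Kohlberg–Neyman). Given w ∈ X, set a_n = (1/n)Σ_{k=0}^{n−1} T^k w and b_n = (1/n)Σ_{k=0}^{n−1} U^k a_n. Then ‖b_n − T b_n‖ ≤ ‖w − Tⁿw‖/n and ‖b_n − U b_n‖ ≤ ‖w − Uⁿw‖/n for all n ≥ 1. -/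

import Mathlib

open Filter
set_option linter.unusedVariables false
section Aux
variable {E : Type*} [NormedAddCommGroup E] [NormedSpace ℝ E]
set_option linter.unusedSectionVars false
variable {E : Type*} [NormedAddCommGroup E] [NormedSpace ℝ E]

lemma avg_step' (x : ℕ → E) (n : ℕ) (hn : n ≠ 0) :
    ((n + 1 : ℕ) : ℝ)⁻¹ • ∑ k ∈ Finset.range (n + 1), x k
      = ((n : ℝ) / (n + 1)) • ((n : ℝ)⁻¹ • ∑ k ∈ Finset.range n, x k)
        + (1 - (n : ℝ) / (n + 1)) • x n := by
  have hn' : (n : ℝ) ≠ 0 := Nat.cast_ne_zero.mpr hn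
  have hn1 : (n : ℝ) + 1 ≠ 0 := by positivity
  rw [Finset.sum_range_succ, smul_add, smul_smul]
  push_cast
  congr 2
  · field_simp
  · field_simp
    ring

lemma affine_avg' (f : E → E)
    (hf : ∀ (x y : E) (t : ℝ), f (t • x + (1 - t) • y) = t • f x + (1 - t) • f y)
    (x : ℕ → E) : ∀ n : ℕ, 1 ≤ n →
    f ((n : ℝ)⁻¹ • ∑ k ∈ Finset.range n, x k)
      = (n : ℝ)⁻¹ • ∑ k ∈ Finset.range n, f (x k) := by
  intro n
  induction n with
  | zero => omega
  | succ n ih =>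
    intro _
    rcases Nat.eq_zero_or_pos n with hn | hn
    · subst hn; simp
    · have hn0 : n ≠ 0 := hn.ne'
      rw [avg_step' x n hn0, hf, ih hn, ← avg_step' (fun k => f (x k)) n hn0]

lemma ne_iter' (f : E → E) (hf : ∀ x y : E, ‖f x - f y‖ ≤ ‖x - y‖) (k : ℕ) (x y : E) :
    ‖f^[k] x - f^[k] y‖ ≤ ‖x - y‖ := by
  induction k with
  | zero => simp
  | succ k ih =>
    rw [Function.iterate_succ_apply', Function.iterate_succ_apply']
    exact (hf _ _).trans ih

lemma comm_iter' (T U : E → E) (hc : ∀ x : E, T (U x) = U (T x)) (k : ℕ) (x : E) :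
    T (U^[k] x) = U^[k] (T x) := by
  induction k generalizing x with
  | zero => simp
  | succ k ih =>
    rw [Function.iterate_succ_apply, Function.iterate_succ_apply, ih, hc]

lemma aff_iter' (f : E → E)
    (hf : ∀ (x y : E) (t : ℝ), f (t • x + (1 - t) • y) = t • f x + (1 - t) • f y)
    (k : ℕ) : ∀ (x y : E) (t : ℝ),
      f^[k] (t • x + (1 - t) • y) = t • f^[k] x + (1 - t) • f^[k] y := by
  induction k with
  | zero => simp
  | succ k ih =>
    intro x y t
    rw [Function.iterate_succ_apply', Function.iterate_succ_apply',
      Function.iterate_succ_apply', ih, hf]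

lemma norm_avg_le' (v : ℕ → E) (n : ℕ) (hn : 1 ≤ n) (C : ℝ)
    (hC : ∀ k < n, ‖v k‖ ≤ C) :
    ‖(n : ℝ)⁻¹ • ∑ k ∈ Finset.range n, v k‖ ≤ C := by
  have hn' : (0 : ℝ) < n := by exact_mod_cast hn
  rw [norm_smul, Real.norm_eq_abs, abs_inv, Nat.abs_cast]
  have h1 : ‖∑ k ∈ Finset.range n, v k‖ ≤ n * C := by
    calc ‖∑ k ∈ Finset.range n, v k‖ ≤ ∑ k ∈ Finset.range n, ‖v k‖ := norm_sum_le _ _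
      _ ≤ ∑ _k ∈ Finset.range n, C :=
          Finset.sum_le_sum fun k hk => hC k (Finset.mem_range.mp hk)
      _ = n * C := by simp [mul_comm]
  calc (n : ℝ)⁻¹ * ‖∑ k ∈ Finset.range n, v k‖ ≤ (n : ℝ)⁻¹ * (n * C) := by
        exact mul_le_mul_of_nonneg_left h1 (by positivity)
    _ = C := by field_simp

end Aux

/-- Cesàro-average estimates for two commuting affine nonexpansive maps: with
`a_n = (1/n) Σ_{k<n} T^k w` and `b_n = (1/n) Σ_{k<n} U^k a_n` one has
`‖b_n − T b_n‖ ≤ ‖w − Tⁿw‖/n` and `‖b_n − U b_n‖ ≤ ‖w − Uⁿw‖/n` for all `n ≥ 1`. -/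
theorem stmt_18 {E : Type*} [NormedAddCommGroup E] [NormedSpace ℝ E] [CompleteSpace E]
    (T U : E → E)
    (hTaff : ∀ (x y : E) (t : ℝ), T (t • x + (1 - t) • y) = t • T x + (1 - t) • T y)
    (hUaff : ∀ (x y : E) (t : ℝ), U (t • x + (1 - t) • y) = t • U x + (1 - t) • U y)
    (hTne : ∀ x y : E, ‖T x - T y‖ ≤ ‖x - y‖)
    (hUne : ∀ x y : E, ‖U x - U y‖ ≤ ‖x - y‖)
    (hcomm : ∀ x : E, T (U x) = U (T x))
    (X : Set E) (hXne : X.Nonempty) (hXconv : Convex ℝ X)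
    (hTX : Set.MapsTo T X X) (hUX : Set.MapsTo U X X)
    (hmT : sInf ((fun x => ‖x - T x‖) '' X) = 0)
    (hmU : sInf ((fun x => ‖x - U x‖) '' X) = 0)
    (hKN : ∀ v ∈ X, Tendsto (fun n : ℕ => ‖v - T^[n] v‖ / n) atTop (nhds 0)
        ∧ Tendsto (fun n : ℕ => ‖v - U^[n] v‖ / n) atTop (nhds 0))
    (w : E) (hw : w ∈ X)
    (a b : ℕ → E)
    (ha : ∀ n : ℕ, a n = (n : ℝ)⁻¹ • ∑ k ∈ Finset.range n, T^[k] w)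
    (hb : ∀ n : ℕ, b n = (n : ℝ)⁻¹ • ∑ k ∈ Finset.range n, U^[k] (a n)) :
    ∀ n : ℕ, 1 ≤ n →
      ‖b n - T (b n)‖ ≤ ‖w - T^[n] w‖ / n ∧
      ‖b n - U (b n)‖ ≤ ‖w - U^[n] w‖ / n := by
  intro n hn
  have hn' : (0 : ℝ) < n := by exact_mod_cast hn
  -- a n - T (a n) = n⁻¹ • (w - T^[n] w)
  have hTa : T (a n) = (n : ℝ)⁻¹ • ∑ k ∈ Finset.range n, T^[k + 1] w := by
    rw [ha, affine_avg' T hTaff _ n hn]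
    simp [← Function.iterate_succ_apply' T]
  have haT : a n - T (a n) = (n : ℝ)⁻¹ • (w - T^[n] w) := by
    rw [hTa, ha, ← smul_sub, ← Finset.sum_sub_distrib,
      Finset.sum_range_sub' (fun k => T^[k] w)]
    simp
  have hnormaT : ‖a n - T (a n)‖ = ‖w - T^[n] w‖ / n := by
    rw [haT, norm_smul, Real.norm_eq_abs, abs_inv, Nat.abs_cast, inv_mul_eq_div]
  constructor
  · -- b n - T (b n) = n⁻¹ • ∑ (U^[k] (a n) - U^[k] (T (a n)))
    have hTb : T (b n) = (n : ℝ)⁻¹ • ∑ k ∈ Finset.range n, U^[k] (T (a n)) := by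
      rw [hb, affine_avg' T hTaff _ n hn]
      congr 1
      exact Finset.sum_congr rfl fun k _ => comm_iter' T U hcomm k (a n)
    have : b n - T (b n)
        = (n : ℝ)⁻¹ • ∑ k ∈ Finset.range n, (U^[k] (a n) - U^[k] (T (a n))) := by
      rw [hTb, hb, ← smul_sub, ← Finset.sum_sub_distrib]
    rw [this, ← hnormaT]
    exact norm_avg_le' _ n hn _ fun k _ => ne_iter' U hUne k _ _
  · -- b n - U (b n) = n⁻¹ • (a n - U^[n] (a n))
    have hUb : U (b n) = (n : ℝ)⁻¹ • ∑ k ∈ Finset.range n, U^[k + 1] (a n) := by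
      rw [hb, affine_avg' U hUaff _ n hn]
      simp [← Function.iterate_succ_apply' U]
    have hbU : b n - U (b n) = (n : ℝ)⁻¹ • (a n - U^[n] (a n)) := by
      rw [hUb, hb, ← smul_sub, ← Finset.sum_sub_distrib,
        Finset.sum_range_sub' (fun k => U^[k] (a n))]
      simp
    have key : ‖a n - U^[n] (a n)‖ ≤ ‖w - U^[n] w‖ := by
      have hUa : U^[n] (a n) = (n : ℝ)⁻¹ • ∑ k ∈ Finset.range n, T^[k] (U^[n] w) := by
        rw [ha, affine_avg' U^[n] (aff_iter' U hUaff n) _ n hn]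
        congr 1
        exact Finset.sum_congr rfl fun k _ =>
          (comm_iter' U^[n] T (fun x => (comm_iter' T U hcomm n x).symm) k w)
      have : a n - U^[n] (a n)
          = (n : ℝ)⁻¹ • ∑ k ∈ Finset.range n, (T^[k] w - T^[k] (U^[n] w)) := by
        rw [hUa, ha, ← smul_sub, ← Finset.sum_sub_distrib]
      rw [this]
      exact norm_avg_le' _ n hn _ fun k _ => ne_iter' T hTne k _ _
    rw [hbU, norm_smul, Real.norm_eq_abs, abs_inv, Nat.abs_cast, inv_mul_eq_div]
    exact div_le_div_of_nonneg_right key hn'.le
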